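/- Let R be a commutative ring, let d ≥ 1 and N ≥ 1, and let A = R[x₁,…,x_d]/(x₁^N,…,x_d^N). Let the symmetric group Σ_d act on A by permuting the variables x₁,…,x_d. Then the R-submodule of Σ_d-invariant elements of A is a free R-module whose basis consists of the images in A of the products σ₁^{β₁}⋯σ_d^{β_d}, where σ_k denotes the k-th elementary symmetric polynomial in x₁,…,x_d and β = (β₁,…,β_d) ranges over all tuples of natural numbers with β₁ + ⋯ + β_d < N. -/

import Mathlib

open MvPolynomial

noncomputable section

variable (R : Type*) [CommRing R] (d N : ℕ)

/-- The ideal `(x₁^N, …, x_d^N)` of `R[x₁,…,x_d]`. -/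
def truncIdeal : Ideal (MvPolynomial (Fin d) R) :=
  Ideal.span (Set.range fun i : Fin d => (X i : MvPolynomial (Fin d) R) ^ N)

lemma truncIdeal_rename_eq_zero (σ : Equiv.Perm (Fin d)) :
    ∀ a ∈ truncIdeal R d N,
      ((Ideal.Quotient.mkₐ R (truncIdeal R d N)).comp
        (rename (σ : Fin d → Fin d))) a = 0 := by
  intro a ha
  have hmap : Ideal.map (rename (σ : Fin d → Fin d) :
      MvPolynomial (Fin d) R →ₐ[R] MvPolynomial (Fin d) R) (truncIdeal R d N) ≤
      truncIdeal R d N := by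
    rw [truncIdeal, Ideal.map_span]
    refine Ideal.span_le.2 ?_
    rintro _ ⟨_, ⟨i, rfl⟩, rfl⟩
    have h1 : (rename (σ : Fin d → Fin d)) ((X i : MvPolynomial (Fin d) R) ^ N) =
        (X (σ i) : MvPolynomial (Fin d) R) ^ N := by
      simp
    rw [h1]
    exact Ideal.subset_span (Set.mem_range_self (σ i))
  have h : rename (σ : Fin d → Fin d) a ∈ truncIdeal R d N :=
    hmap (Ideal.mem_map_of_mem _ ha)
  show Ideal.Quotient.mkₐ R (truncIdeal R d N) (rename (σ : Fin d → Fin d) a) = 0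
  rw [Ideal.Quotient.mkₐ_eq_mk]
  exact Ideal.Quotient.eq_zero_iff_mem.2 h

/-- The action of a permutation `σ ∈ Σ_d` on `R[x₁,…,x_d]/(x₁^N,…,x_d^N)`, induced by
permuting the variables. -/
def permAct (σ : Equiv.Perm (Fin d)) :
    (MvPolynomial (Fin d) R ⧸ truncIdeal R d N) →ₐ[R]
      (MvPolynomial (Fin d) R ⧸ truncIdeal R d N) :=
  Ideal.Quotient.liftₐ (truncIdeal R d N)
    ((Ideal.Quotient.mkₐ R (truncIdeal R d N)).comp (rename (σ : Fin d → Fin d)))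
    (truncIdeal_rename_eq_zero R d N σ)

/-- The `R`-submodule of `Σ_d`-invariant elements of `R[x₁,…,x_d]/(x₁^N,…,x_d^N)`. -/
def invariantsSubmodule : Submodule R (MvPolynomial (Fin d) R ⧸ truncIdeal R d N) :=
  ⨅ σ : Equiv.Perm (Fin d),
    LinearMap.eqLocus (permAct R d N σ).toLinearMap LinearMap.id

namespace Stmt2Aux
open Finset


def lamF (β : Fin d → ℕ) : Fin d →₀ ℕ :=
  Finsupp.equivFunOnFinite.symm fun i => ∑ j ∈ univ.filter (fun j => i ≤ j), β j

lemma lamF_apply (β : Fin d → ℕ) (i : Fin d) :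
    lamF d β i = ∑ j ∈ univ.filter (fun j => i ≤ j), β j := rfl

lemma lamF_succ (β : Fin d → ℕ) (i : Fin d) :
    lamF d β i = β i + ∑ j ∈ univ.filter (fun j => i < j), β j := by
  rw [lamF_apply]
  have : univ.filter (fun j => i ≤ j) = insert i (univ.filter (fun j => i < j)) := by
    ext j; simp [Finset.mem_filter, le_iff_lt_or_eq, eq_comm, or_comm]
  rw [this, Finset.sum_insert (by simp)]

lemma sum_gt_eq (β : Fin d → ℕ) (i : Fin d) :
    ∑ j ∈ univ.filter (fun j => i < j), β j =
      if h : i.1 + 1 < d then lamF d β ⟨i.1 + 1, h⟩ else 0 := by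
  split_ifs with h
  · rw [lamF_apply]
    apply Finset.sum_congr _ (fun _ _ => rfl)
    ext j
    simp only [Finset.mem_filter, Finset.mem_univ, true_and]
    constructor
    · intro hj; exact Fin.mk_le_of_le_val hj
    · intro hj; exact lt_of_lt_of_le (by exact Fin.mk_lt_of_lt_val (Nat.lt_succ_self _)) hj
  · have : univ.filter (fun j => i < j) = ∅ := by
      ext j
      simp only [Finset.mem_filter, Finset.mem_univ, true_and, Finset.notMem_empty,
        iff_false]
      intro hj
      exact h (lt_of_le_of_lt (Nat.succ_le_of_lt hj) j.2)
    simp [this]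

lemma lamF_injective : Function.Injective (lamF d) := by
  intro β β' h
  funext i
  have h1 : lamF d β i = lamF d β' i := by rw [h]
  rw [lamF_succ, lamF_succ, sum_gt_eq, sum_gt_eq] at h1
  split_ifs at h1 with hh
  · have h2 : lamF d β ⟨i.1+1, hh⟩ = lamF d β' ⟨i.1+1, hh⟩ := by rw [h]
    omega
  · omega



def indF (t : Finset (Fin d)) : Fin d →₀ ℕ := ∑ i ∈ t, Finsupp.single i 1

lemma indF_apply (t : Finset (Fin d)) (i : Fin d) :
    indF d t i = if i ∈ t then 1 else 0 := by
  classical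
  simp only [indF, Finset.sum_apply', Finsupp.single_apply]
  rw [Finset.sum_ite_eq' t i (fun _ => 1)]

lemma indF_injective : Function.Injective (indF d) := by
  intro t t' h
  ext i
  have := congrArg (fun f => f i) h
  simp only [indF_apply] at this
  by_cases hi : i ∈ t <;> by_cases hi' : i ∈ t' <;> simp_all

lemma sum_Iic_indF (t : Finset (Fin d)) (m : Fin d) :
    ∑ x ∈ Iic m, indF d t x = #(t ∩ Iic m) := by
  classical
  simp only [indF_apply]
  rw [Finset.sum_ite_mem]
  simp [Finset.inter_comm]

-- coefficients of esymm
lemma coeff_esymm_eq_zero {m : ℕ} {μ : Fin d →₀ ℕ}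
    (h : ∀ t ∈ powersetCard m (univ : Finset (Fin d)), μ ≠ indF d t) :
    coeff μ (esymm (Fin d) R m) = 0 := by
  rw [esymm_eq_sum_monomial, MvPolynomial.coeff_sum]
  refine Finset.sum_eq_zero fun t ht => ?_
  rw [coeff_monomial, if_neg]
  intro he
  exact h t ht (by rw [← he]; rfl)

lemma coeff_esymm_indF {m : ℕ} (t₀ : Finset (Fin d)) (h0 : #t₀ = m) :
    coeff (indF d t₀) (esymm (Fin d) R m) = 1 := by
  rw [esymm_eq_sum_monomial, MvPolynomial.coeff_sum]
  rw [Finset.sum_eq_single t₀]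
  · rw [coeff_monomial, if_pos (by rfl : (∑ i ∈ t₀, Finsupp.single i 1) = indF d t₀)]
  · intro t ht hne
    rw [coeff_monomial, if_neg]
    intro he
    exact hne (indF_injective d (show indF d t = indF d t₀ from he))
  · intro h
    exact absurd (Finset.mem_powersetCard_univ.2 h0) h

lemma mem_support_esymm {m : ℕ} {μ : Fin d →₀ ℕ}
    (h : coeff μ (esymm (Fin d) R m) ≠ 0) :
    ∃ t : Finset (Fin d), #t = m ∧ μ = indF d t := by
  by_contra hc
  push_neg at hc
  exact h (coeff_esymm_eq_zero R d fun t ht => hc t (Finset.mem_powersetCard_univ.1 ht))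

lemma card_Iic_fin (m : Fin d) : #(Iic m) = m.1 + 1 := by
  exact Fin.card_Iic m

def prodE (β : Fin d → ℕ) : MvPolynomial (Fin d) R :=
  ∏ k : Fin d, (esymm (Fin d) R (k.1 + 1)) ^ (β k)

lemma sum_update_succ (β : Fin d → ℕ) (k : Fin d) (h : β k ≠ 0) :
    ∑ j, Function.update β k (β k - 1) j + 1 = ∑ j, β j := by
  rw [Finset.sum_update_of_mem (Finset.mem_univ k)]
  have h2 : β k + ∑ x ∈ univ.erase k, β x = ∑ j, β j :=
    Finset.add_sum_erase univ β (Finset.mem_univ k)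
  rw [Finset.sdiff_singleton_eq_erase]
  omega

lemma lamF_update (β : Fin d → ℕ) (k : Fin d) (h : β k ≠ 0) :
    lamF d β = indF d (Iic k) + lamF d (Function.update β k (β k - 1)) := by
  ext i
  rw [Finsupp.add_apply, lamF_apply, lamF_apply, indF_apply]
  have : ∀ j ∈ univ.filter (fun j => i ≤ j),
      β j = Function.update β k (β k - 1) j + (if j = k then 1 else 0) := by
    intro j _
    by_cases hj : j = k
    · subst hj; simp [Function.update_self]; omega
    · simp [Function.update_of_ne hj, hj]
  rw [Finset.sum_congr rfl this, Finset.sum_add_distrib]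
  rw [Finset.sum_ite_eq' (univ.filter (fun j => i ≤ j)) k (fun _ => 1)]
  simp only [Finset.mem_filter, Finset.mem_univ, true_and, Finset.mem_Iic]
  exact add_comm _ _

lemma prodE_update (β : Fin d → ℕ) (k : Fin d) (h : β k ≠ 0) :
    prodE R d β = esymm (Fin d) R (k.1 + 1) * prodE R d (Function.update β k (β k - 1)) := by
  unfold prodE
  rw [← Finset.mul_prod_erase univ _ (Finset.mem_univ k),
      ← Finset.mul_prod_erase univ _ (Finset.mem_univ k), ← mul_assoc]
  congr 1
  · rw [Function.update_self, ← pow_succ']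
    congr 1
    omega
  · exact Finset.prod_congr rfl fun j hj => by
      rw [Function.update_of_ne (Finset.ne_of_mem_erase hj)]

theorem prodE_props : ∀ (n : ℕ) (β : Fin d → ℕ), ∑ j, β j = n →
    (∀ μ ∈ (prodE R d β).support, (∀ i, μ i ≤ ∑ k, β k) ∧
       ∀ m : Fin d, ∑ t ∈ Iic m, μ t ≤ ∑ t ∈ Iic m, lamF d β t)
    ∧ coeff (lamF d β) (prodE R d β) = 1 := by
  intro n
  induction n with
  | zero =>
      intro β hβ
      have hz : ∀ j, β j = 0 := by
        intro j
        exact (Finset.sum_eq_zero_iff.1 hβ) j (Finset.mem_univ j)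
      have h1 : prodE R d β = 1 := by
        unfold prodE
        rw [Finset.prod_eq_one]
        intro j _
        rw [hz, pow_zero]
      have h2 : lamF d β = 0 := by
        ext i
        rw [lamF_apply]
        simp [hz]
      constructor
      · intro μ hμ
        rw [h1] at hμ
        have hμ0 : μ = 0 := by
          rw [MvPolynomial.mem_support_iff, MvPolynomial.coeff_one] at hμ
          by_contra hc
          rw [if_neg (fun he => hc he.symm)] at hμ
          exact hμ rfl
        subst hμ0
        simp [h2, hz]
      · rw [h1, h2, MvPolynomial.coeff_one, if_pos rfl]
  | succ n ih =>
      intro β hβ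
      obtain ⟨k, hk⟩ : ∃ k, β k ≠ 0 := by
        by_contra hc
        push_neg at hc
        simp [hc] at hβ
      set β' := Function.update β k (β k - 1) with hβ'
      have hsum' : ∑ j, β' j = n := by
        simp only [hβ']
        have := sum_update_succ d β k hk
        omega
      obtain ⟨ihsupp, ihcoeff⟩ := ih β' hsum'
      have hlam := lamF_update d β k hk
      have hprod := prodE_update R d β k hk
      constructor
      · intro μ hμ
        rw [hprod] at hμ
        have := MvPolynomial.support_mul _ _ hμ
        rw [Finset.mem_add] at this
        obtain ⟨a, ha, b, hb, rfl⟩ := this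
        have ha' : coeff a (esymm (Fin d) R (k.1+1)) ≠ 0 := by
          simpa [MvPolynomial.mem_support_iff] using ha
        obtain ⟨t, htc, rfl⟩ := mem_support_esymm R d ha'
        obtain ⟨hb1, hb2⟩ := ihsupp b hb
        constructor
        · intro i
          have h1 : indF d t i ≤ 1 := by rw [indF_apply]; split <;> omega
          have h2 : b i ≤ ∑ j, β' j := hb1 i
          have h3 := sum_update_succ d β k hk
          simp only [Finsupp.add_apply]
          omega
        · intro m
          have e1 : ∑ t_1 ∈ Iic m, (indF d t + b) t_1
              = #(t ∩ Iic m) + ∑ t_1 ∈ Iic m, b t_1 := by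
            simp only [Finsupp.add_apply, Finset.sum_add_distrib, sum_Iic_indF]
          have e2 : ∑ t_1 ∈ Iic m, lamF d β t_1
              = #(Iic k ∩ Iic m) + ∑ t_1 ∈ Iic m, lamF d β' t_1 := by
            rw [hlam]
            simp only [Finsupp.add_apply, Finset.sum_add_distrib, sum_Iic_indF]
            rfl
          have hcard : #(t ∩ Iic m) ≤ #(Iic k ∩ Iic m) := by
            rcases le_total k m with hkm | hmk
            · have : Iic k ∩ Iic m = Iic k := by
                rw [Finset.inter_eq_left]
                exact Finset.Iic_subset_Iic.2 hkm
              rw [this, Fin.card_Iic]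
              calc #(t ∩ Iic m) ≤ #t := Finset.card_le_card Finset.inter_subset_left
                _ = k.1 + 1 := htc
            · have : Iic k ∩ Iic m = Iic m := by
                rw [Finset.inter_eq_right]
                exact Finset.Iic_subset_Iic.2 hmk
              rw [this]
              exact Finset.card_le_card Finset.inter_subset_right
          have := hb2 m
          omega
      · rw [hprod, MvPolynomial.coeff_mul]
        have hmem : (indF d (Iic k), lamF d β') ∈ Finset.HasAntidiagonal.antidiagonal (lamF d β) := by
          rw [Finset.HasAntidiagonal.mem_antidiagonal, ← hlam]
        rw [Finset.sum_eq_single_of_mem _ hmem]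
        · rw [coeff_esymm_indF R d _ (by rw [Fin.card_Iic]), ihcoeff, one_mul]
        · rintro ⟨a, b⟩ hab hne
          rw [Finset.HasAntidiagonal.mem_antidiagonal] at hab
          by_contra hc
          have ha : coeff a (esymm (Fin d) R (k.1+1)) ≠ 0 := fun h => hc (by rw [h, zero_mul])
          have hb : coeff b (prodE R d β') ≠ 0 := fun h => hc (by rw [h, mul_zero])
          obtain ⟨t, htc, rfl⟩ := mem_support_esymm R d ha
          by_cases ht : t = Iic k
          · subst ht
            apply hne
            have : b = lamF d β' := by
              have := hlam ▸ hab
              exact add_left_cancel this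
            rw [this]
          · obtain ⟨j, hjk, hjt⟩ : ∃ j, j ∈ Iic k ∧ j ∉ t := by
              by_contra hcc
              push_neg at hcc
              exact ht (Finset.eq_of_subset_of_card_le hcc (by rw [htc, Fin.card_Iic])).symm
            have hAB : ∑ x ∈ Iic j, indF d t x + ∑ x ∈ Iic j, b x
                = ∑ x ∈ Iic j, lamF d β x := by
              rw [← Finset.sum_add_distrib]
              exact Finset.sum_congr rfl fun x _ => by
                rw [← Finsupp.add_apply, hab]
            have hBle : ∑ x ∈ Iic j, b x ≤ ∑ x ∈ Iic j, lamF d β' x :=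
              (ihsupp b (by rwa [MvPolynomial.mem_support_iff])).2 j
            have hlamj : ∑ x ∈ Iic j, lamF d β x
                = (j.1 + 1) + ∑ x ∈ Iic j, lamF d β' x := by
              rw [hlam]
              simp only [Finsupp.add_apply, Finset.sum_add_distrib, sum_Iic_indF]
              congr 1
              have : Iic k ∩ Iic j = Iic j := by
                rw [Finset.inter_eq_right]
                exact Finset.Iic_subset_Iic.2 (Finset.mem_Iic.1 hjk)
              rw [this, Fin.card_Iic]
            have hA : ∑ x ∈ Iic j, indF d t x ≤ j.1 := by
              rw [sum_Iic_indF]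
              calc #(t ∩ Iic j) ≤ #((Iic j).erase j) := by
                    apply Finset.card_le_card
                    intro x hx
                    rw [Finset.mem_erase]
                    refine ⟨fun he => hjt (he ▸ (Finset.mem_inter.1 hx).1), (Finset.mem_inter.1 hx).2⟩
                _ = j.1 := by rw [Finset.card_erase_of_mem (Finset.mem_Iic.2 le_rfl), Fin.card_Iic]; omega
            omega


def enc (α : Fin d →₀ ℕ) : ℕ := ∑ i, α i * N ^ (d - 1 - i.1)

lemma sum_split_Iic (f : Fin d → ℕ) (m : Fin d) :
    ∑ i, f i = ∑ i ∈ Iic m, f i + ∑ i ∈ Ioi m, f i := by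
  rw [← Finset.sum_union]
  · congr 1
    ext i
    simp [le_or_gt]
  · intro s hs hs' x hx
    have h1 := hs hx
    have h2 := hs' hx
    simp only [Finset.mem_Iic] at h1
    simp only [Finset.mem_Ioi] at h2
    exact absurd h1 (not_le.2 h2)

lemma geom_aux (hN : 1 ≤ N) : ∀ t : ℕ, ∑ e ∈ range t, (N - 1) * N ^ e = N ^ t - 1 := by
  intro t
  induction t with
  | zero => simp
  | succ t ih =>
      rw [Finset.sum_range_succ, ih]
      have h1 : 1 ≤ N ^ t := Nat.one_le_pow _ _ hN
      have h2 : N ^ (t + 1) = N ^ t * N := pow_succ N t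
      have h2' : N ^ (t + 1) = N * N ^ t := by rw [pow_succ, Nat.mul_comm]
      have h4 : (N - 1) * N ^ t = N * N ^ t - N ^ t := by
        rw [Nat.sub_mul, one_mul]
      have h5 : N ^ t ≤ N * N ^ t := Nat.le_mul_of_pos_left _ (by omega)
      omega

lemma tail_lt (hN : 1 ≤ N) (m : Fin d) (μ : Fin d →₀ ℕ) (hμ : ∀ i, μ i < N) :
    ∑ i ∈ Ioi m, μ i * N ^ (d - 1 - i.1) < N ^ (d - 1 - m.1) := by
  have hle : ∑ i ∈ Ioi m, μ i * N ^ (d - 1 - i.1)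
      ≤ ∑ i ∈ Ioi m, (N - 1) * N ^ (d - 1 - i.1) := by
    refine Finset.sum_le_sum fun i _ => Nat.mul_le_mul_right _ ?_
    have := hμ i; omega
  have himg : ∑ i ∈ Ioi m, (N - 1) * N ^ (d - 1 - i.1)
      = ∑ e ∈ (Ioi m).image (fun i : Fin d => d - 1 - i.1), (N - 1) * N ^ e := by
    rw [Finset.sum_image]
    intro a ha b hb hab
    have ha' : a.1 < d := a.2
    have hb' : b.1 < d := b.2
    exact Fin.ext (by simp only at hab; omega)
  have hsub : (Ioi m).image (fun i : Fin d => d - 1 - i.1) ⊆ range (d - 1 - m.1) := by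
    intro e he
    obtain ⟨i, hi, rfl⟩ := Finset.mem_image.1 he
    rw [Finset.mem_Ioi] at hi
    have := i.2
    have : m.1 < i.1 := hi
    rw [Finset.mem_range]
    omega
  calc ∑ i ∈ Ioi m, μ i * N ^ (d - 1 - i.1)
      ≤ ∑ e ∈ (Ioi m).image (fun i : Fin d => d - 1 - i.1), (N - 1) * N ^ e := by
        rw [← himg]; exact hle
    _ ≤ ∑ e ∈ range (d - 1 - m.1), (N - 1) * N ^ e :=
        Finset.sum_le_sum_of_subset hsub
    _ = N ^ (d - 1 - m.1) - 1 := geom_aux N hN _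
    _ < N ^ (d - 1 - m.1) := by
        have : 1 ≤ N ^ (d - 1 - m.1) := Nat.one_le_pow _ _ hN
        omega

lemma enc_lt_core (hN : 1 ≤ N) (μ lam : Fin d →₀ ℕ) (hμ : ∀ i, μ i < N) (m : Fin d)
    (heq : ∀ i, i < m → μ i = lam i) (hlt : μ m < lam m) :
    enc d N μ < enc d N lam := by
  rw [enc, enc, sum_split_Iic d _ m, sum_split_Iic d (fun i => lam i * _) m]
  have e1 : ∀ ν : Fin d →₀ ℕ, ∑ i ∈ Iic m, ν i * N ^ (d - 1 - i.1)
      = ∑ i ∈ Iio m, ν i * N ^ (d - 1 - i.1) + ν m * N ^ (d - 1 - m.1) := by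
    intro ν
    rw [← Finset.Iic_erase, Finset.sum_erase_add _ _ (Finset.mem_Iic.2 le_rfl)]
  rw [e1, e1]
  have heq' : ∑ i ∈ Iio m, μ i * N ^ (d - 1 - i.1) = ∑ i ∈ Iio m, lam i * N ^ (d - 1 - i.1) :=
    Finset.sum_congr rfl fun i hi => by rw [heq i (Finset.mem_Iio.1 hi)]
  have htail := tail_lt d N hN m μ hμ
  have hmono : μ m * N ^ (d - 1 - m.1) + N ^ (d - 1 - m.1) ≤ lam m * N ^ (d - 1 - m.1) := by
    have h : (μ m + 1) * N ^ (d - 1 - m.1) ≤ lam m * N ^ (d - 1 - m.1) :=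
      Nat.mul_le_mul_right _ hlt
    rw [add_mul, one_mul] at h
    exact h
  linarith [heq', hmono, htail, Nat.zero_le (∑ i ∈ Ioi m, lam i * N ^ (d - 1 - i.1))]

lemma exists_min_diff (μ lam : Fin d →₀ ℕ) (hne : μ ≠ lam) :
    ∃ m : Fin d, μ m ≠ lam m ∧ ∀ i, i < m → μ i = lam i := by
  classical
  set S := univ.filter (fun i : Fin d => μ i ≠ lam i) with hS
  have hSne : S.Nonempty := by
    by_contra hc
    rw [Finset.not_nonempty_iff_eq_empty] at hc
    apply hne
    ext i
    by_contra hi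
    have : i ∈ S := by rw [hS]; simp [hi]
    rw [hc] at this
    exact absurd this (Finset.notMem_empty i)
  refine ⟨S.min' hSne, ?_, ?_⟩
  · exact (Finset.mem_filter.mp (S.min'_mem hSne)).2
  · intro i hi
    by_contra hii
    have : i ∈ S := by rw [hS]; simp [hii]
    exact absurd hi (not_lt.2 (S.min'_le i this))

lemma enc_strict (hN : 1 ≤ N) (μ lam : Fin d →₀ ℕ) (hμ : ∀ i, μ i < N)
    (hne : μ ≠ lam) (hdom : ∀ m : Fin d, ∑ t ∈ Iic m, μ t ≤ ∑ t ∈ Iic m, lam t) :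
    enc d N μ < enc d N lam := by
  obtain ⟨m, hm, heq⟩ := exists_min_diff d μ lam hne
  refine enc_lt_core d N hN μ lam hμ m heq ?_
  have h1 := hdom m
  have e1 : ∀ ν : Fin d →₀ ℕ, ∑ i ∈ Iic m, ν i = ∑ i ∈ Iio m, ν i + ν m := by
    intro ν
    rw [← Finset.Iic_erase, Finset.sum_erase_add _ _ (Finset.mem_Iic.2 le_rfl)]
  rw [e1, e1] at h1
  have heq' : ∑ i ∈ Iio m, μ i = ∑ i ∈ Iio m, lam i :=
    Finset.sum_congr rfl fun i hi => heq i (Finset.mem_Iio.1 hi)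
  omega

lemma enc_ne (hN : 1 ≤ N) (μ lam : Fin d →₀ ℕ) (hμ : ∀ i, μ i < N) (hlam : ∀ i, lam i < N)
    (hne : μ ≠ lam) : enc d N μ ≠ enc d N lam := by
  obtain ⟨m, hm, heq⟩ := exists_min_diff d μ lam hne
  rcases lt_or_gt_of_ne hm with h | h
  · exact Nat.ne_of_lt (enc_lt_core d N hN μ lam hμ m heq h)
  · exact Nat.ne_of_gt (enc_lt_core d N hN lam μ hlam m (fun i hi => (heq i hi).symm) h)

lemma mul_cross (a b c e : ℕ) (h1 : a < b) (h2 : c < e) : a * e + b * c < a * c + b * e := by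
  obtain ⟨s, rfl⟩ := Nat.exists_eq_add_of_lt h1
  obtain ⟨t, rfl⟩ := Nat.exists_eq_add_of_lt h2
  ring_nf
  nlinarith

lemma enc_swap_lt (hN : 1 ≤ N) (μ : Fin d →₀ ℕ) (i j : Fin d) (hij : i < j)
    (hlt : μ i < μ j) (hjN : μ j < N) :
    enc d N μ < enc d N (Finsupp.mapDomain (⇑(Equiv.swap i j)) μ) := by
  classical
  set τ := Equiv.swap i j with hτ
  set w : Fin d → ℕ := fun x => N ^ (d - 1 - x.1) with hw
  have happ : ∀ x, Finsupp.mapDomain (⇑τ) μ x = μ (τ x) := by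
    intro x
    rw [Finsupp.mapDomain_equiv_apply, hτ, Equiv.symm_swap]
  have henc : enc d N (Finsupp.mapDomain (⇑τ) μ) = ∑ y, μ y * w (τ y) := by
    rw [enc]
    rw [Fintype.sum_equiv τ (fun y => μ y * w (τ y))
      (fun x => Finsupp.mapDomain (⇑τ) μ x * w x) ?_]
    intro y
    simp only [hτ, Finsupp.mapDomain_equiv_apply, Equiv.symm_apply_apply]
  have hsplit : ∀ h : Fin d → ℕ, ∑ y, h y = ∑ y ∈ (univ.erase i).erase j, h y + h j + h i := by
    intro h
    have hj' : j ∈ univ.erase i := Finset.mem_erase.2 ⟨Fin.ne_of_gt hij, Finset.mem_univ j⟩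
    rw [← Finset.sum_erase_add _ _ (Finset.mem_univ i), ← Finset.sum_erase_add _ _ hj']
  have hrest : ∀ y ∈ (univ.erase i).erase j, μ y * w (τ y) = μ y * w y := by
    intro y hy
    rw [Finset.mem_erase] at hy
    have hy2 := Finset.mem_erase.1 hy.2
    rw [hτ, Equiv.swap_apply_of_ne_of_ne hy2.1 hy.1]
  have hN2 : 2 ≤ N := by omega
  have hwlt : w j < w i := by
    rw [hw]
    refine Nat.pow_lt_pow_right hN2 ?_
    have := j.2
    have := hij
    simp only [Fin.lt_def] at this
    omega
  have hti : τ i = j := Equiv.swap_apply_left i j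
  have htj : τ j = i := Equiv.swap_apply_right i j
  rw [henc, enc, hsplit (fun y => μ y * w (τ y)), hsplit (fun y => μ y * w y)]
  rw [Finset.sum_congr rfl hrest, hti, htj]
  have := mul_cross (μ i) (μ j) (w j) (w i) hlt hwlt
  omega

lemma coeff_mapDomain_perm {R : Type*} [CommRing R] (p : MvPolynomial (Fin d) R)
    (hp : p.IsSymmetric) (π : Equiv.Perm (Fin d)) (μ : Fin d →₀ ℕ) :
    coeff (Finsupp.mapDomain (⇑π) μ) p = coeff μ p := by
  conv_lhs => rw [← hp π]
  exact coeff_rename_mapDomain (⇑π) (Equiv.injective π) p μ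


def badIdeal : Ideal (MvPolynomial (Fin d) R) where
  carrier := {p | ∀ α ∈ p.support, ∃ i, N ≤ α i}
  zero_mem' := by intro α hα; simp at hα
  add_mem' := by
    intro a b ha hb α hα
    have := Finsupp.support_add hα
    rw [Finset.mem_union] at this
    rcases this with h | h
    · exact ha α h
    · exact hb α h
  smul_mem' := by
    intro c p hp α hα
    rw [smul_eq_mul] at hα
    classical
    have := MvPolynomial.support_mul c p hα
    rw [Finset.mem_add] at this
    obtain ⟨a, _, b, hb, rfl⟩ := this
    obtain ⟨i, hi⟩ := hp b hb
    exact ⟨i, le_trans hi (by simp)⟩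

lemma truncIdeal_le_bad : truncIdeal R d N ≤ badIdeal R d N := by
  rw [truncIdeal, Ideal.span_le]
  rintro _ ⟨i, rfl⟩ α hα
  dsimp only at hα
  rw [MvPolynomial.X_pow_eq_monomial] at hα
  have := MvPolynomial.support_monomial_subset hα
  rw [Finset.mem_singleton] at this
  subst this
  exact ⟨i, by simp⟩

lemma mem_truncIdeal_of_bad (p : MvPolynomial (Fin d) R)
    (h : ∀ α ∈ p.support, ∃ i, N ≤ α i) : p ∈ truncIdeal R d N := by
  rw [← p.support_sum_monomial_coeff]
  refine Ideal.sum_mem _ fun α hα => ?_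
  obtain ⟨i, hi⟩ := h α hα
  have hexp : α - Finsupp.single i N + Finsupp.single i N = α := by
    ext j
    simp only [Finsupp.add_apply, Finsupp.tsub_apply, Finsupp.single_apply]
    split_ifs with hj
    · subst hj; omega
    · omega
  have key : monomial α (coeff α p)
      = monomial (α - Finsupp.single i N) (coeff α p) * X i ^ N := by
    rw [MvPolynomial.X_pow_eq_monomial, MvPolynomial.monomial_mul, mul_one, hexp]
  rw [key]
  exact Ideal.mul_mem_left _ _ (Ideal.subset_span ⟨i, rfl⟩)

lemma eq_zero_of_good_mem (p : MvPolynomial (Fin d) R) (hp : p ∈ truncIdeal R d N)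
    (hg : ∀ α ∈ p.support, ∀ i, α i < N) : p = 0 := by
  have hb := truncIdeal_le_bad R d N hp
  by_contra hc
  obtain ⟨α, hα⟩ := (MvPolynomial.support_nonempty).2 hc
  obtain ⟨i, hi⟩ := hb α hα
  exact absurd (hg α hα i) (not_lt.2 hi)

def goodPart (p : MvPolynomial (Fin d) R) : MvPolynomial (Fin d) R :=
  ∑ α ∈ p.support.filter (fun α => ∀ i, α i < N), monomial α (coeff α p)

lemma coeff_goodPart (p : MvPolynomial (Fin d) R) (α : Fin d →₀ ℕ) :
    coeff α (goodPart R d N p)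
      = if α ∈ p.support.filter (fun α => ∀ i, α i < N) then coeff α p else 0 := by
  classical
  rw [goodPart, MvPolynomial.coeff_sum]
  rw [← Finset.sum_ite_eq' (p.support.filter (fun α => ∀ i, α i < N)) α (fun γ => coeff γ p)]
  exact Finset.sum_congr rfl fun γ _ => by rw [MvPolynomial.coeff_monomial]

lemma goodPart_good (p : MvPolynomial (Fin d) R) :
    ∀ α ∈ (goodPart R d N p).support, ∀ i, α i < N := by
  intro α hα
  rw [MvPolynomial.mem_support_iff, coeff_goodPart] at hα
  by_cases h : α ∈ p.support.filter (fun α => ∀ i, α i < N)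
  · exact (Finset.mem_filter.1 h).2
  · rw [if_neg h] at hα; exact absurd rfl hα

lemma sub_goodPart_bad (p : MvPolynomial (Fin d) R) :
    ∀ α ∈ (p - goodPart R d N p).support, ∃ i, N ≤ α i := by
  intro α hα
  rw [MvPolynomial.mem_support_iff, MvPolynomial.coeff_sub, coeff_goodPart] at hα
  by_cases hgood : ∀ i, α i < N
  · exfalso
    by_cases hmem : α ∈ p.support
    · rw [if_pos (Finset.mem_filter.2 ⟨hmem, hgood⟩)] at hα
      simp at hα
    · rw [MvPolynomial.notMem_support_iff] at hmem
      rw [hmem] at hα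
      simp at hα
  · push_neg at hgood
    exact hgood

lemma mk_goodPart (p : MvPolynomial (Fin d) R) :
    Ideal.Quotient.mk (truncIdeal R d N) (goodPart R d N p)
      = Ideal.Quotient.mk (truncIdeal R d N) p := by
  rw [Ideal.Quotient.mk_eq_mk_iff_sub_mem]
  have := mem_truncIdeal_of_bad R d N (p - goodPart R d N p) (sub_goodPart_bad R d N p)
  have h2 : goodPart R d N p - p = -(p - goodPart R d N p) := by ring
  rw [h2]
  exact neg_mem this

lemma rename_good (p : MvPolynomial (Fin d) R) (π : Equiv.Perm (Fin d))
    (hg : ∀ α ∈ p.support, ∀ i, α i < N) :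
    ∀ α ∈ (rename (⇑π) p).support, ∀ i, α i < N := by
  classical
  intro α hα
  rw [MvPolynomial.support_rename_of_injective (Equiv.injective π)] at hα
  obtain ⟨γ, hγ, rfl⟩ := Finset.mem_image.1 hα
  intro i
  rw [Finsupp.mapDomain_equiv_apply]
  exact hg γ hγ _


end Stmt2Aux


namespace Stmt2Aux
open Finset

lemma prodE_symmetric (β : Fin d → ℕ) : (prodE R d β).IsSymmetric := by
  intro π
  rw [prodE, map_prod]
  refine Finset.prod_congr rfl fun k _ => ?_
  rw [map_pow, rename_esymm]

lemma prodE_good (β : Fin d → ℕ) (hβ : ∑ i, β i < N) :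
    ∀ μ ∈ (prodE R d β).support, ∀ i, μ i < N :=
  fun μ hμ i => lt_of_le_of_lt (((prodE_props R d (∑ j, β j) β rfl).1 μ hμ).1 i) hβ

lemma lamF_of_antitone (lam : Fin d →₀ ℕ) (hdec : ∀ i j : Fin d, i < j → lam j ≤ lam i) :
    lamF d (fun k => lam k - (if h : k.1 + 1 < d then lam ⟨k.1 + 1, h⟩ else 0)) = lam := by
  set β := fun k : Fin d => lam k - (if h : k.1 + 1 < d then lam ⟨k.1 + 1, h⟩ else 0) with hβ
  ext i
  suffices H : ∀ t (i : Fin d), d - i.1 ≤ t → lamF d β i = lam i from H d i (by omega)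
  intro t
  induction t with
  | zero => intro i hi; exact absurd hi (by have := i.2; omega)
  | succ t ih =>
      intro i hi
      rw [lamF_succ, sum_gt_eq]
      have hβi : β i = lam i - (if h : i.1 + 1 < d then lam ⟨i.1 + 1, h⟩ else 0) := rfl
      by_cases h : i.1 + 1 < d
      · rw [dif_pos h, ih ⟨i.1 + 1, h⟩ (by simp only; omega)]
        rw [hβi, dif_pos h]
        have hle : lam ⟨i.1 + 1, h⟩ ≤ lam i := hdec i ⟨i.1 + 1, h⟩ (by simp [Fin.lt_def])
        omega
      · rw [dif_neg h, hβi, dif_neg h]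
        omega

lemma lamF_le_sum (β : Fin d → ℕ) (i : Fin d) : lamF d β i ≤ ∑ j, β j := by
  rw [lamF_apply]
  exact Finset.sum_le_sum_of_subset (Finset.filter_subset _ _)

lemma lamF_zero_apply (hd : 0 < d) (β : Fin d → ℕ) : lamF d β ⟨0, hd⟩ = ∑ j, β j := by
  rw [lamF_apply]
  refine Finset.sum_congr ?_ fun _ _ => rfl
  rw [Finset.filter_true_of_mem]
  intro j _
  exact Fin.mk_le_of_le_val (Nat.zero_le _)

lemma span_good (hd : 0 < d) (hN : 1 ≤ N) :
    ∀ (n : ℕ) (p : MvPolynomial (Fin d) R), p.IsSymmetric →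
      (∀ α ∈ p.support, ∀ i, α i < N) → (∀ α ∈ p.support, enc d N α < n) →
      p ∈ Submodule.span R
        (Set.range fun β : {β : Fin d → ℕ // (∑ i, β i) < N} => prodE R d β.1) := by
  classical
  intro n
  induction n using Nat.strong_induction_on with
  | _ n ih =>
  intro p hsym hgood henc
  by_cases hp0 : p = 0
  · rw [hp0]; exact Submodule.zero_mem _
  obtain ⟨lam, hlmem, hlmax⟩ :=
    Finset.exists_max_image p.support (enc d N) (MvPolynomial.support_nonempty.2 hp0)
  have hdec : ∀ i j : Fin d, i < j → lam j ≤ lam i := by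
    intro i j hij
    by_contra hc
    push_neg at hc
    have hswap := enc_swap_lt d N hN lam i j hij hc (hgood lam hlmem j)
    have hmem2 : Finsupp.mapDomain (⇑(Equiv.swap i j)) lam ∈ p.support := by
      rw [MvPolynomial.mem_support_iff, coeff_mapDomain_perm d p hsym]
      exact MvPolynomial.mem_support_iff.1 hlmem
    exact absurd (hlmax _ hmem2) (not_le.2 hswap)
  set β : Fin d → ℕ := fun k => lam k - (if h : k.1 + 1 < d then lam ⟨k.1 + 1, h⟩ else 0)
    with hβdef
  have hlamβ : lamF d β = lam := lamF_of_antitone d lam hdec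
  have hsumβ : ∑ k, β k < N := by
    have h0 := lamF_zero_apply d hd β
    rw [hlamβ] at h0
    rw [← h0]
    exact hgood lam hlmem ⟨0, hd⟩
  set c := coeff lam p with hc
  set q := p - c • prodE R d β with hq
  have hqsym : q.IsSymmetric := by
    intro π
    rw [hq, map_sub, map_smul, hsym π, prodE_symmetric R d β π]
  have hqgood : ∀ α ∈ q.support, ∀ i, α i < N := by
    intro α hα
    rw [hq] at hα
    have hsub := MvPolynomial.support_sub _ _ _ hα
    rw [Finset.mem_union] at hsub
    rcases hsub with h | h
    · exact hgood α h
    · exact prodE_good R d N β hsumβ α (MvPolynomial.support_smul h)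
  have hqcoeff : coeff lam q = 0 := by
    rw [hq, MvPolynomial.coeff_sub, MvPolynomial.coeff_smul, ← hlamβ,
      (prodE_props R d _ β rfl).2, smul_eq_mul, mul_one, hc, hlamβ, sub_self]
  have hqenc : ∀ α ∈ q.support, enc d N α < enc d N lam := by
    intro α hα
    have hαne : α ≠ lam := by
      intro he
      rw [MvPolynomial.mem_support_iff, he, hqcoeff] at hα
      exact hα rfl
    have hα' := hα
    rw [hq] at hα'
    have hsub := MvPolynomial.support_sub _ _ _ hα'
    rw [Finset.mem_union] at hsub
    rcases hsub with h | h
    · exact lt_of_le_of_ne (hlmax α h)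
        (enc_ne d N hN α lam (hgood α h) (hgood lam hlmem) hαne)
    · have h2 := MvPolynomial.support_smul h
      have hprops := (prodE_props R d _ β rfl).1 α h2
      refine enc_strict d N hN α lam
        (fun i => lt_of_le_of_lt (hprops.1 i) hsumβ) hαne ?_
      intro m
      have hm := hprops.2 m
      rwa [hlamβ] at hm
  have hqspan := ih (enc d N lam) (henc lam hlmem) q hqsym hqgood hqenc
  have hmem : prodE R d β ∈
      Set.range (fun β : {β : Fin d → ℕ // (∑ i, β i) < N} => prodE R d β.1) :=
    ⟨⟨β, hsumβ⟩, rfl⟩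
  have hpq : p = q + c • prodE R d β := by rw [hq]; ring
  rw [hpq]
  exact Submodule.add_mem _ hqspan (Submodule.smul_mem _ c (Submodule.subset_span hmem))

lemma indep (hN : 1 ≤ N) :
    LinearIndependent R
      (fun β : {β : Fin d → ℕ // (∑ i, β i) < N} => prodE R d β.1) := by
  rw [linearIndependent_iff]
  intro l hl
  by_contra hl0
  obtain ⟨b0, hb0m, hb0max⟩ := Finset.exists_max_image l.support
    (fun β => enc d N (lamF d β.1)) (Finsupp.support_nonempty_iff.2 hl0)
  have key : coeff (lamF d b0.1)
      (Finsupp.linearCombination R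
        (fun β : {β : Fin d → ℕ // (∑ i, β i) < N} => prodE R d β.1) l) = l b0 := by
    rw [Finsupp.linearCombination_apply, Finsupp.sum, MvPolynomial.coeff_sum]
    rw [Finset.sum_eq_single_of_mem b0 hb0m]
    · rw [MvPolynomial.coeff_smul, (prodE_props R d _ b0.1 rfl).2, smul_eq_mul, mul_one]
    · intro b hb hne
      rw [MvPolynomial.coeff_smul]
      have hzero : coeff (lamF d b0.1) (prodE R d b.1) = 0 := by
        by_contra hcc
        have hm : lamF d b0.1 ∈ (prodE R d b.1).support := MvPolynomial.mem_support_iff.2 hcc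
        have hprops := (prodE_props R d _ b.1 rfl).1 _ hm
        by_cases heq2 : lamF d b0.1 = lamF d b.1
        · exact hne (Subtype.ext (lamF_injective d heq2).symm)
        · have hcmp := enc_strict d N hN (lamF d b0.1) (lamF d b.1)
            (fun i => lt_of_le_of_lt (lamF_le_sum d b0.1 i) b0.2) heq2 hprops.2
          exact absurd (hb0max b hb) (not_le.2 hcmp)
      rw [hzero, smul_zero]
  rw [hl, MvPolynomial.coeff_zero] at key
  exact (Finsupp.mem_support_iff.1 hb0m) key.symm

lemma indep_mk (hN : 1 ≤ N) :
    LinearIndependent R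
      (fun β : {β : Fin d → ℕ // (∑ i, β i) < N} =>
        Ideal.Quotient.mk (truncIdeal R d N) (prodE R d β.1)) := by
  classical
  rw [linearIndependent_iff]
  intro l hl
  set v : {β : Fin d → ℕ // (∑ i, β i) < N} → MvPolynomial (Fin d) R :=
    fun β => prodE R d β.1 with hv
  set P := Finsupp.linearCombination R v l with hP
  have hcomb : Ideal.Quotient.mk (truncIdeal R d N) P = 0 := by
    have happ := Finsupp.apply_linearCombination R
      ((Ideal.Quotient.mkₐ R (truncIdeal R d N)).toLinearMap) v l
    rw [← hl]
    exact happ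
  have hPgood : ∀ α ∈ P.support, ∀ i, α i < N := by
    intro α hα
    rw [hP, Finsupp.linearCombination_apply, Finsupp.sum] at hα
    have hb := MvPolynomial.support_sum hα
    obtain ⟨b, _, hmem⟩ := Finset.mem_biUnion.1 hb
    exact prodE_good R d N b.1 b.2 α (MvPolynomial.support_smul hmem)
  have hP0 : P = 0 :=
    eq_zero_of_good_mem R d N P (Ideal.Quotient.eq_zero_iff_mem.1 hcomb) hPgood
  exact linearIndependent_iff.1 (indep R d N hN) l hP0

lemma permAct_mk (σ : Equiv.Perm (Fin d)) (p : MvPolynomial (Fin d) R) :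
    permAct R d N σ (Ideal.Quotient.mk (truncIdeal R d N) p)
      = Ideal.Quotient.mk (truncIdeal R d N) (rename (⇑σ) p) := rfl

lemma mem_invariants_iff (x : MvPolynomial (Fin d) R ⧸ truncIdeal R d N) :
    x ∈ invariantsSubmodule R d N ↔ ∀ σ : Equiv.Perm (Fin d), permAct R d N σ x = x := by
  rw [invariantsSubmodule, Submodule.mem_iInf]
  apply forall_congr'
  intro σ
  rw [LinearMap.mem_eqLocus]
  constructor <;> (intro h; exact h)

end Stmt2Aux

/-- Let `R` be a commutative ring, `d, N ≥ 1`, and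
`A = R[x₁,…,x_d]/(x₁^N,…,x_d^N)` with `Σ_d` acting by permuting the variables.  Then the
submodule of `Σ_d`-invariants of `A` is a free `R`-module with basis the images of the
monomials `σ₁^{β₁} ⋯ σ_d^{β_d}` in the elementary symmetric polynomials, where `β` ranges
over tuples with `β₁ + ⋯ + β_d < N`. -/
theorem stmt2 (hd : 1 ≤ d) (hN : 1 ≤ N) :
    ∃ b : Module.Basis {β : Fin d → ℕ // (∑ i, β i) < N} R (invariantsSubmodule R d N),
      ∀ β : {β : Fin d → ℕ // (∑ i, β i) < N},
        (b β : MvPolynomial (Fin d) R ⧸ truncIdeal R d N) =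
          Ideal.Quotient.mk (truncIdeal R d N)
            (∏ k : Fin d, (esymm (Fin d) R (k.1 + 1)) ^ (β.1 k)) := by
  classical
  have hv : ∀ β : {β : Fin d → ℕ // (∑ i, β i) < N},
      Ideal.Quotient.mk (truncIdeal R d N) (Stmt2Aux.prodE R d β.1)
        ∈ invariantsSubmodule R d N := by
    intro β
    rw [Stmt2Aux.mem_invariants_iff]
    intro σ
    rw [Stmt2Aux.permAct_mk, Stmt2Aux.prodE_symmetric R d β.1 σ]
  set W := invariantsSubmodule R d N with hW
  set v : {β : Fin d → ℕ // (∑ i, β i) < N} → W :=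
    fun β => ⟨Ideal.Quotient.mk (truncIdeal R d N) (Stmt2Aux.prodE R d β.1), hv β⟩ with hvdef
  have hli : LinearIndependent R v :=
    LinearIndependent.of_comp W.subtype (Stmt2Aux.indep_mk R d N hN)
  have hsp : ⊤ ≤ Submodule.span R (Set.range v) := by
    intro x _
    obtain ⟨p₀, hp₀⟩ := Ideal.Quotient.mk_surjective
      (x : MvPolynomial (Fin d) R ⧸ truncIdeal R d N)
    set p := Stmt2Aux.goodPart R d N p₀ with hpdef
    have hgood := Stmt2Aux.goodPart_good R d N p₀
    have hmk : Ideal.Quotient.mk (truncIdeal R d N) p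
        = (x : MvPolynomial (Fin d) R ⧸ truncIdeal R d N) := by
      rw [hpdef, Stmt2Aux.mk_goodPart, hp₀]
    have hsym : p.IsSymmetric := by
      intro σ
      have hinv := (Stmt2Aux.mem_invariants_iff R d N _).1 x.2 σ
      have h1 : Ideal.Quotient.mk (truncIdeal R d N) (rename (⇑σ) p)
          = Ideal.Quotient.mk (truncIdeal R d N) p := by
        rw [← Stmt2Aux.permAct_mk, hmk, hinv]
      have hdiff : rename (⇑σ) p - p ∈ truncIdeal R d N :=
        (Ideal.Quotient.mk_eq_mk_iff_sub_mem _ _).mp h1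
      have hdiffgood : ∀ α ∈ (rename (⇑σ) p - p).support, ∀ i, α i < N := by
        intro α hα
        have hsub := MvPolynomial.support_sub _ _ _ hα
        rw [Finset.mem_union] at hsub
        rcases hsub with h | h
        · exact Stmt2Aux.rename_good R d N p σ hgood α h
        · exact hgood α h
      have hzero := Stmt2Aux.eq_zero_of_good_mem R d N _ hdiff hdiffgood
      exact sub_eq_zero.1 hzero
    have hspan := Stmt2Aux.span_good R d N hd hN
      ((p.support.sup (Stmt2Aux.enc d N)) + 1) p hsym hgood
      (fun α hα => Nat.lt_succ_of_le (Finset.le_sup hα))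
    have hmap := Submodule.mem_map_of_mem
      (f := (Ideal.Quotient.mkₐ R (truncIdeal R d N)).toLinearMap) hspan
    rw [Submodule.map_span] at hmap
    have hset : (Ideal.Quotient.mkₐ R (truncIdeal R d N)).toLinearMap ''
        (Set.range fun β : {β : Fin d → ℕ // (∑ i, β i) < N} => Stmt2Aux.prodE R d β.1)
        = W.subtype '' (Set.range v) := by
      rw [← Set.range_comp, ← Set.range_comp]
      rfl
    rw [hset, ← Submodule.map_span] at hmap
    have hxmem : (x : MvPolynomial (Fin d) R ⧸ truncIdeal R d N)
        ∈ Submodule.map W.subtype (Submodule.span R (Set.range v)) := by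
      have heq : (Ideal.Quotient.mkₐ R (truncIdeal R d N)).toLinearMap p
          = (x : MvPolynomial (Fin d) R ⧸ truncIdeal R d N) := hmk
      rwa [heq] at hmap
    obtain ⟨y, hy, hyx⟩ := Submodule.mem_map.1 hxmem
    have hyx' : y = x := Subtype.ext hyx
    rwa [← hyx']
  refine ⟨Module.Basis.mk hli hsp, ?_⟩
  intro β
  rw [Module.Basis.mk_apply]
  rfl

end
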